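/- arXiv:1107.4392 — 2 statements merged into one kernel-verified Lean document; each statement's English description precedes it below -/
import Mathlib

section
/- Let G be a finite abelian group and let m be the largest cardinality of a proper subgroup of G. Let A_1, ..., A_j be multisets in G and A = A_1 ∪ ... ∪ A_j (multiset union). Then either ΣA = G or #ΣA ≥ (Σ_{i=1}^j #ΣA_i) − (j−1)m. -/
open Pointwise

/-- The sumset ΣA of a multiset A: all sums of submultisets of A (including the empty sum 0). -/
def sumset {G : Type*} [AddCommMonoid G] (A : Multiset G) : Set G :=
  {x | ∃ B ≤ A, B.sum = x}

section aux

variable {G : Type*} [AddCommGroup G]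

lemma zero_mem_sumset (A : Multiset G) : (0 : G) ∈ sumset A :=
  ⟨0, Multiset.zero_le A, rfl⟩

lemma sumset_add (A B : Multiset G) : sumset (A + B) = sumset A + sumset B := by
  classical
  ext x
  constructor
  · rintro ⟨C, hC, rfl⟩
    refine ⟨(C ∩ A).sum, ⟨C ∩ A, Multiset.inter_le_right, rfl⟩,
      (C - A).sum, ⟨C - A, ?_, rfl⟩, ?_⟩
    · rw [Multiset.sub_le_iff_le_add]
      exact hC.trans (le_of_eq (add_comm A B))
    · show (C ∩ A).sum + (C - A).sum = C.sum
      rw [← Multiset.sum_add, add_comm (C ∩ A), Multiset.sub_add_inter]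
  · rintro ⟨_, ⟨C₁, h₁, rfl⟩, _, ⟨C₂, h₂, rfl⟩, rfl⟩
    exact ⟨C₁ + C₂, add_le_add h₁ h₂, Multiset.sum_add _ _⟩

variable [Fintype G] [DecidableEq G]

/-- The Kneser-type corollary for two finsets, proved via the Dyson e-transform. -/
lemma kneser_cor (m : ℕ)
    (hm : IsGreatest {n : ℕ | ∃ H : AddSubgroup G, H ≠ ⊤ ∧ Nat.card H = n} m)
    (B : Finset G) : ∀ A : Finset G, A.Nonempty → B.Nonempty →
      (A + B = Finset.univ ∨ A.card + B.card ≤ (A + B).card + m) := by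
  induction B using Finset.strongInductionOn with
  | _ B IH =>
  intro A hA hB
  -- m ≥ 1
  obtain ⟨H₀, hH₀, hcard₀⟩ := hm.1
  have hGnt : Nontrivial G := by
    by_contra h
    have hsub : Subsingleton G := not_nontrivial_iff_subsingleton.mp h
    apply hH₀
    ext x
    simp only [AddSubgroup.mem_top, iff_true]
    have : x = 0 := Subsingleton.elim x 0
    rw [this]; exact H₀.zero_mem
  have hm1 : 1 ≤ m := by
    have := hm.2 ⟨⊥, bot_ne_top, rfl⟩
    simpa using this
  by_cases hstuck : ∀ x ∈ A, ∀ y ∈ B, ∀ b ∈ B, b + (x - y) ∈ A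
  · -- stuck case
    obtain ⟨y₀, hy₀⟩ := hB
    -- A + B = A + {y₀}
    have hAB : A + B = A.image (· + y₀) := by
      apply Finset.Subset.antisymm
      · intro z hz
        obtain ⟨a, ha, b, hb, rfl⟩ := Finset.mem_add.1 hz
        refine Finset.mem_image.2 ⟨b + (a - y₀), hstuck a ha y₀ hy₀ b hb, by abel⟩
      · intro z hz
        obtain ⟨a, ha, rfl⟩ := Finset.mem_image.1 hz
        exact Finset.mem_add.2 ⟨a, ha, y₀, hy₀, rfl⟩
    have hcardAB : (A + B).card = A.card := by
      rw [hAB]; exact Finset.card_image_of_injective _ (add_left_injective y₀)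
    -- the stabilizer subgroup
    have key : ∀ g : G, (∀ a ∈ A, a + g ∈ A) → ∀ a ∈ A, a - g ∈ A := by
      intro g hg a ha
      have himg : A.image (· + g) = A := by
        apply Finset.eq_of_subset_of_card_le
        · intro z hz
          obtain ⟨a', ha', rfl⟩ := Finset.mem_image.1 hz
          exact hg a' ha'
        · rw [Finset.card_image_of_injective _ (add_left_injective g)]
      have : a ∈ A.image (· + g) := by rw [himg]; exact ha
      obtain ⟨a', ha', haa⟩ := Finset.mem_image.1 this
      have : a - g = a' := by rw [← haa]; abel
      rw [this]; exact ha'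
    set N : AddSubgroup G :=
      { carrier := {g : G | ∀ a ∈ A, a + g ∈ A}
        zero_mem' := by intro a ha; simpa using ha
        add_mem' := by
          intro g₁ g₂ h₁ h₂ a ha
          have := h₂ (a + g₁) (h₁ a ha)
          rwa [add_assoc] at this
        neg_mem' := by
          intro g hg a ha
          have := key g hg a ha
          rwa [sub_eq_add_neg] at this } with hN
    have hBN : ∀ b ∈ B, ∀ y ∈ B, b - y ∈ N := by
      intro b hb y hy a ha
      have := hstuck a ha y hy b hb
      have e : a + (b - y) = b + (a - y) := by abel
      rwa [e]
    by_cases hNtop : N = ⊤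
    · left
      -- A = univ
      obtain ⟨a₀, ha₀⟩ := hA
      have hAuniv : A = Finset.univ := by
        apply Finset.eq_univ_of_forall
        intro x
        have hx : (x - a₀) ∈ N := by rw [hNtop]; trivial
        have := hx a₀ ha₀
        rwa [add_sub_cancel] at this
      rw [hAB, hAuniv]
      apply Finset.eq_univ_of_forall
      intro x
      exact Finset.mem_image.2 ⟨x - y₀, Finset.mem_univ _, by abel⟩
    · right
      -- B ⊆ y₀ + N, so B.card ≤ Nat.card N ≤ m
      have hBle : B.card ≤ m := by
        have hinj : ∀ b ∈ B, (b - y₀ : G) ∈ N := fun b hb => hBN b hb y₀ hy₀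
        have : B.card ≤ Nat.card N := by
          have hNc : Nat.card N = ((N : Set G)).ncard := by
            rw [← Nat.card_coe_set_eq]
            rfl
          rw [hNc]
          have himg : ((B.image (· - y₀) : Finset G) : Set G) ⊆ (N : Set G) := by
            intro z hz
            simp only [Finset.coe_image, Set.mem_image, Finset.mem_coe] at hz
            obtain ⟨b, hb, rfl⟩ := hz
            exact hinj b hb
          have := Set.ncard_le_ncard himg (Set.toFinite _)
          rwa [Set.ncard_coe_finset, Finset.card_image_of_injective _ sub_left_injective] at this
        exact this.trans (hm.2 ⟨N, hNtop, rfl⟩)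
      rw [hcardAB]
      omega
  · -- transform case
    push_neg at hstuck
    obtain ⟨x, hx, y, hy, b, hb, hbx⟩ := hstuck
    set e := x - y with he
    set A' := A ∪ B.image (· + e) with hA'
    set B' := B ∩ A.image (· - e) with hB'
    have hyB' : y ∈ B' := by
      refine Finset.mem_inter.2 ⟨hy, Finset.mem_image.2 ⟨x, hx, ?_⟩⟩
      rw [he]; abel
    have hbB' : b ∉ B' := by
      intro hmem
      obtain ⟨a, ha, hab⟩ := Finset.mem_image.1 (Finset.mem_inter.1 hmem).2
      apply hbx
      have : a = b + (x - y) := by rw [← he, ← hab]; abel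
      rwa [← this]
    have hssub : B' ⊂ B := by
      refine Finset.ssubset_iff_of_subset (Finset.inter_subset_left) |>.2 ⟨b, hb, hbB'⟩
    -- sums contained
    have hsum : A' + B' ⊆ A + B := by
      intro z hz
      obtain ⟨a, ha, c, hc, rfl⟩ := Finset.mem_add.1 hz
      obtain ⟨hcB, hcA⟩ := Finset.mem_inter.1 hc
      rcases Finset.mem_union.1 ha with ha | ha
      · exact Finset.mem_add.2 ⟨a, ha, c, hcB, rfl⟩
      · obtain ⟨b', hb', rfl⟩ := Finset.mem_image.1 ha
        obtain ⟨a', ha', hae⟩ := Finset.mem_image.1 hcA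
        refine Finset.mem_add.2 ⟨a' , ha', b', hb', ?_⟩
        rw [← hae]; abel
    -- cards
    have hcards : A'.card + B'.card = A.card + B.card := by
      have h1 : A'.card = A.card + (B.image (· + e) \ A).card := by
        rw [hA', Finset.union_comm, ← Finset.card_sdiff_add_card]
        omega
      have h2 : B.card = B'.card + (B \ A.image (· - e)).card := by
        rw [hB', ← Finset.card_inter_add_card_sdiff B (A.image (· - e))]
      have h3 : (B.image (· + e) \ A).card = (B \ A.image (· - e)).card := by
        have himg : B.image (· + e) \ A = (B \ A.image (· - e)).image (· + e) := by
          ext z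
          simp only [Finset.mem_sdiff, Finset.mem_image]
          constructor
          · rintro ⟨⟨b', hb', rfl⟩, hz⟩
            refine ⟨b', ⟨hb', ?_⟩, rfl⟩
            rintro ⟨a, ha, hab⟩
            apply hz
            have : b' + e = a := by rw [← hab]; abel
            rwa [this]
          · rintro ⟨b', ⟨hb', hbim⟩, rfl⟩
            exact ⟨⟨b', hb', rfl⟩, fun hmem => hbim ⟨b' + e, hmem, by abel⟩⟩
        rw [himg, Finset.card_image_of_injective _ (add_left_injective e)]
      omega
    have hA'ne : A'.Nonempty := hA.mono Finset.subset_union_left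
    have hB'ne : B'.Nonempty := ⟨y, hyB'⟩
    rcases IH B' hssub A' hA'ne hB'ne with h | h
    · left
      have : Finset.univ ⊆ A + B := h ▸ hsum
      exact Finset.eq_univ_of_forall fun x => this (Finset.mem_univ x)
    · right
      calc A.card + B.card = A'.card + B'.card := hcards.symm
        _ ≤ (A' + B').card + m := h
        _ ≤ (A + B).card + m := by
            have := Finset.card_le_card hsum
            omega

variable [Fintype G]

/-- Set version. -/
lemma kneser_cor_set (m : ℕ)
    (hm : IsGreatest {n : ℕ | ∃ H : AddSubgroup G, H ≠ ⊤ ∧ Nat.card H = n} m)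
    (X Y : Set G) (hX : X.Nonempty) (hY : Y.Nonempty) :
    X + Y = Set.univ ∨ X.ncard + Y.ncard ≤ (X + Y).ncard + m := by
  classical
  set SX := X.toFinite.toFinset with hSX
  set SY := Y.toFinite.toFinset with hSY
  have hcoeX : (SX : Set G) = X := X.toFinite.coe_toFinset
  have hcoeY : (SY : Set G) = Y := Y.toFinite.coe_toFinset
  have hcoe : ((SX + SY : Finset G) : Set G) = X + Y := by
    rw [Finset.coe_add, hcoeX, hcoeY]
  have hSXne : SX.Nonempty := (Set.Finite.toFinset_nonempty _).mpr hX
  have hSYne : SY.Nonempty := (Set.Finite.toFinset_nonempty _).mpr hY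
  rcases kneser_cor m hm SY SX hSXne hSYne with h | h
  · left
    rw [← hcoe, h, Finset.coe_univ]
  · right
    have e1 : X.ncard = SX.card := (Set.ncard_eq_toFinset_card X X.toFinite)
    have e2 : Y.ncard = SY.card := (Set.ncard_eq_toFinset_card Y Y.toFinite)
    have e3 : (X + Y).ncard = (SX + SY).card := by rw [← hcoe, Set.ncard_coe_finset]
    omega

end aux

theorem stmt_2 {G : Type*} [AddCommGroup G] [Fintype G] (m : ℕ)
    (hm : IsGreatest {n : ℕ | ∃ H : AddSubgroup G, H ≠ ⊤ ∧ Nat.card H = n} m)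
    (j : ℕ) (A : Fin j → Multiset G) :
    sumset (∑ i, A i) = Set.univ ∨
      (sumset (∑ i, A i)).ncard + (j - 1) * m ≥ ∑ i, (sumset (A i)).ncard := by
  classical
  induction j with
  | zero =>
    right; simp
  | succ n IH =>
    by_cases hn : n = 0
    · subst hn
      right
      simp [Fin.sum_univ_one]
    · have hsum : (∑ i : Fin (n+1), A i) = A 0 + ∑ i : Fin n, A i.succ :=
        Fin.sum_univ_succ A
      have hsumc : (∑ i : Fin (n+1), (sumset (A i)).ncard)
          = (sumset (A 0)).ncard + ∑ i : Fin n, (sumset (A i.succ)).ncard :=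
        Fin.sum_univ_succ _
      have hdecomp : sumset (∑ i : Fin (n+1), A i)
          = sumset (A 0) + sumset (∑ i : Fin n, A i.succ) := by
        rw [hsum, sumset_add]
      rcases IH (fun i => A i.succ) with h | h
      · left
        rw [hdecomp, h]
        ext x
        simp only [Set.mem_univ, iff_true]
        exact ⟨0, zero_mem_sumset _, x, trivial, zero_add x⟩
      · rcases kneser_cor_set m hm (sumset (A 0)) (sumset (∑ i : Fin n, A i.succ))
          ⟨0, zero_mem_sumset _⟩ ⟨0, zero_mem_sumset _⟩ with h2 | h2
        · left; rw [hdecomp, h2]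
        · right
          rw [hsumc, hdecomp]
          simp only [ge_iff_le] at h ⊢
          have hj : (n + 1 - 1) * m = (n - 1) * m + m := by
            obtain ⟨k, rfl⟩ := Nat.exists_eq_succ_of_ne_zero hn
            simp [Nat.succ_sub_one, Nat.succ_mul]
          rw [hj]
          omega
end

section
/- Let p be prime, A a valid multiset in (Z/pZ)^2, and z a nonzero element of (Z/pZ)^2. Let m_t denote the multiplicity of t in A, and let L be the subgroup generated by z. For any integer j with 0 ≤ j ≤ (1/2)·Σ_{t ∉ L} min(m_t, m_{z−t}), we have #ΣA ≥ min(p, 1 + j + Σ_{y∈L} m_y) · min(p, 1 + |A| − 2j − Σ_{y∈L} m_y). -/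
open scoped Classical in
/-- The number of elements of the multiset A (with multiplicity) lying in the subgroup H. -/
noncomputable def inCount {G : Type*} [AddCommGroup G] (A : Multiset G) (H : AddSubgroup G) : ℕ :=
  Multiset.card (A.filter (fun x => x ∈ H))

/-- A multiset in (Z/pZ)² is valid if 0 ∉ A and every nontrivial (cyclic) subgroup contains
fewer than p elements of A, counted with multiplicity. -/
def ValidMS (p : ℕ) (A : Multiset (ZMod p × ZMod p)) : Prop :=
  (0 : ZMod p × ZMod p) ∉ A ∧
    ∀ x : ZMod p × ZMod p, x ≠ 0 → inCount A (AddSubgroup.zmultiples x) < p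

open Finset
open scoped Pointwise
section SF
variable {G : Type*} [AddCommMonoid G] [DecidableEq G]

noncomputable def SF (A : Multiset G) : Finset G := (A.powerset.map Multiset.sum).toFinset

lemma mem_SF {A : Multiset G} {x : G} : x ∈ SF A ↔ ∃ B ≤ A, B.sum = x := by
  simp [SF, Multiset.mem_powerset]

lemma zero_mem_SF (A : Multiset G) : (0:G) ∈ SF A := mem_SF.2 ⟨0, zero_le, Multiset.sum_zero⟩

omit [AddCommMonoid G] in
lemma multiset_le_add {B X Y : Multiset G} (h : B ≤ X + Y) :
    ∃ B₁ ≤ X, ∃ B₂ ≤ Y, B = B₁ + B₂ := by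
  refine ⟨B ∩ X, Multiset.inter_le_right, B - X, ?_, ?_⟩
  · rw [Multiset.le_iff_count] at h ⊢
    intro a; have := h a
    simp only [Multiset.count_sub, Multiset.count_add] at *
    omega
  · ext a
    have := Multiset.le_iff_count.1 h a
    simp only [Multiset.count_add, Multiset.count_sub, Multiset.count_inter,
      Multiset.count_add] at *
    omega

lemma SF_add (X Y : Multiset G) : SF (X + Y) = SF X + SF Y := by
  ext x
  simp only [mem_SF, Finset.mem_add]
  constructor
  · rintro ⟨B, hB, rfl⟩
    obtain ⟨B₁, h₁, B₂, h₂, rfl⟩ := multiset_le_add hB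
    exact ⟨B₁.sum, ⟨B₁, h₁, rfl⟩, B₂.sum, ⟨B₂, h₂, rfl⟩, (Multiset.sum_add _ _).symm⟩
  · rintro ⟨a, ⟨B₁, h₁, rfl⟩, b, ⟨B₂, h₂, rfl⟩, rfl⟩
    exact ⟨B₁ + B₂, add_le_add h₁ h₂, (Multiset.sum_add _ _)⟩

lemma SF_singleton (a : G) : SF ({a} : Multiset G) = {0, a} := by
  ext x
  simp only [mem_SF, Multiset.le_singleton, Finset.mem_insert, Finset.mem_singleton]
  constructor
  · rintro ⟨B, (rfl | rfl), rfl⟩ <;> simp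
  · rintro (rfl | rfl)
    · exact ⟨0, Or.inl rfl, Multiset.sum_zero⟩
    · exact ⟨_, Or.inr rfl, Multiset.sum_singleton _⟩

lemma SF_cons (a : G) (A : Multiset G) : SF (a ::ₘ A) = ({0, a} : Finset G) + SF A := by
  rw [← Multiset.singleton_add, SF_add, SF_singleton]

lemma SF_zero : SF (0 : Multiset G) = {0} := by
  ext x; simp [mem_SF, eq_comm]

lemma SF_map {H : Type*} [AddCommMonoid H] [DecidableEq H] (f : G →+ H) (A : Multiset G) :
    SF (A.map f) = (SF A).image f := by
  induction A using Multiset.induction with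
  | empty => simp [SF_zero]
  | cons a A ih =>
    rw [Multiset.map_cons, SF_cons, SF_cons, ih, Finset.image_add]
    congr 1
    simp [Finset.image_insert, map_zero]

lemma SF_mono {X Y : Multiset G} (h : X ≤ Y) : SF X ⊆ SF Y := by
  intro x hx
  obtain ⟨B, hB, rfl⟩ := mem_SF.1 hx
  exact mem_SF.2 ⟨B, hB.trans h, rfl⟩
end SF

lemma olson_zmod {p : ℕ} (hp : p.Prime) (B : Multiset (ZMod p)) (hB : ∀ x ∈ B, x ≠ 0) :
    min p (Multiset.card B + 1) ≤ (SF B).card := by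
  induction B using Multiset.induction with
  | empty => simpa [SF_zero] using min_le_right p 1
  | cons a B ih =>
    have ha : a ≠ 0 := hB a (Multiset.mem_cons_self a B)
    have ihB := ih (fun x hx => hB x (Multiset.mem_cons_of_mem hx))
    rw [SF_cons]
    have hcd := ZMod.cauchy_davenport hp (s := ({0, a} : Finset (ZMod p)))
      (t := SF B) ⟨0, by simp⟩ ⟨0, zero_mem_SF B⟩
    have h2 : ({0, a} : Finset (ZMod p)).card = 2 := by
      rw [Finset.card_insert_of_notMem (by simpa using ha.symm)]; rfl
    rw [h2] at hcd
    simp only [Multiset.card_cons]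
    omega
lemma olson_group {H : Type*} [AddCommGroup H] [DecidableEq H] {p : ℕ} (hp : p.Prime)
    (hH : Nat.card H = p) (B : Multiset H) (hB : ∀ x ∈ B, x ≠ 0) :
    min p (Multiset.card B + 1) ≤ (SF B).card := by
  have : Fact p.Prime := ⟨hp⟩
  have hcy : IsAddCyclic H := isAddCyclic_of_prime_card hH
  have e : ZMod p ≃+ H := hH ▸ zmodAddCyclicAddEquiv hcy
  set B' : Multiset (ZMod p) := B.map e.symm with hB'
  have hmap : B'.map e.toAddMonoidHom = B := by
    simp [hB', Multiset.map_map, Function.comp_def]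
  have hcard : Multiset.card B' = Multiset.card B := by simp [hB']
  have hnz : ∀ x ∈ B', x ≠ 0 := by
    intro x hx
    obtain ⟨y, hy, rfl⟩ := Multiset.mem_map.1 hx
    simp only [ne_eq, AddEquiv.map_eq_zero_iff]
    exact hB y hy
  have := olson_zmod hp B' hnz
  rw [hcard] at this
  refine this.trans ?_
  rw [← hmap, SF_map]
  exact le_of_eq (Finset.card_image_of_injective _ e.injective).symm

lemma olson_subgroup {H : Type*} [AddCommGroup H] [DecidableEq H] {p : ℕ} (hp : p.Prime)
    (L : AddSubgroup H) (hL : Nat.card L = p) (B : Multiset H)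
    (hmem : ∀ x ∈ B, x ∈ L) (hnz : ∀ x ∈ B, x ≠ 0) :
    min p (Multiset.card B + 1) ≤ (SF B).card := by
  classical
  set B' : Multiset L := B.attach.map (fun x => (⟨x.1, hmem x.1 x.2⟩ : L)) with hB'
  have hmap : B'.map L.subtype = B := by
    simp [hB', Multiset.map_map, Function.comp_def]
  have hcard : Multiset.card B' = Multiset.card B := by simp [hB']
  have hnz' : ∀ x ∈ B', x ≠ 0 := by
    intro x hx
    obtain ⟨y, hy, rfl⟩ := Multiset.mem_map.1 hx
    simp only [ne_eq, AddSubgroup.mk_eq_zero]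
    exact hnz y.1 y.2
  have := olson_group hp hL B' hnz'
  rw [hcard] at this
  refine this.trans ?_
  rw [← hmap, SF_map]
  exact le_of_eq (Finset.card_image_of_injective _ L.subtype_injective).symm
lemma extract_pairs {G : Type*} [AddCommGroup G] [Fintype G] [DecidableEq G]
    (z : G) (L : AddSubgroup G) [DecidablePred (· ∈ L)]
    (hsub : ∀ t : G, t ∉ L → (z - t ∉ L ∧ t ≠ z - t)) (j : ℕ) :
    ∀ M : Multiset G,
    2 * j ≤ (∑ t : G, if t ∈ L then 0 else min (M.count t) (M.count (z - t))) →
    ∃ C ≤ M, Multiset.card C = 2 * j ∧ ∀ k ≤ j, ∃ B ≤ C, B.sum = k • z := by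
  induction j with
  | zero =>
    intro M _
    refine ⟨0, zero_le, rfl, fun k hk => ⟨0, le_refl _, ?_⟩⟩
    simp [Nat.le_zero.mp hk]
  | succ j ih =>
    intro M hM
    have hex : ∃ t : G, t ∉ L ∧ 0 < min (M.count t) (M.count (z - t)) := by
      by_contra hcon
      push_neg at hcon
      have : (∑ t : G, if t ∈ L then 0 else min (M.count t) (M.count (z - t))) = 0 := by
        refine Finset.sum_eq_zero fun t _ => ?_
        by_cases ht : t ∈ L
        · simp [ht]
        · simpa [ht] using hcon t ht
      omega
    obtain ⟨t, htL, htpos⟩ := hex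
    have htM : t ∈ M := Multiset.count_pos.1 (by omega)
    have hztL : z - t ∉ L := (hsub t htL).1
    have htne : t ≠ z - t := (hsub t htL).2
    have hztM : z - t ∈ M := Multiset.count_pos.1 (by omega)
    set M' := (M.erase t).erase (z - t) with hM'
    have hcount : ∀ a : G, M'.count a = M.count a - (if a = t then 1 else 0) -
        (if a = z - t then 1 else 0) := by
      intro a
      by_cases h1 : a = t
      · subst h1
        rw [hM', Multiset.count_erase_of_ne htne, Multiset.count_erase_self]
        simp [htne]
      · by_cases h2 : a = z - t
        · subst h2
          rw [hM', Multiset.count_erase_self, Multiset.count_erase_of_ne h1]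
          simp [h1]
        · rw [hM', Multiset.count_erase_of_ne h2, Multiset.count_erase_of_ne h1]
          simp [h1, h2]
    have hsum' : 2 * j ≤ ∑ s : G, if s ∈ L then 0 else min (M'.count s) (M'.count (z - s)) := by
      have hterm : ∀ s : G, (if s ∈ L then 0 else min (M.count s) (M.count (z - s)))
          = (if s ∈ L then 0 else min (M'.count s) (M'.count (z - s)))
            + (if s = t then 1 else 0) + (if s = z - t then 1 else 0) := by
        intro s
        by_cases hsL : s ∈ L
        · have hst : s ≠ t := fun h => htL (h ▸ hsL)
          have hszt : s ≠ z - t := fun h => hztL (h ▸ hsL)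
          simp [hsL, hst, hszt]
        · by_cases hst : s = t
          · subst hst
            rw [if_neg hsL, if_neg hsL, if_pos rfl, if_neg htne]
            have h1' : Multiset.count s M' = Multiset.count s M - 1 := by
              rw [hcount s, if_pos rfl, if_neg htne]; omega
            have h2' : Multiset.count (z - s) M' = Multiset.count (z - s) M - 1 := by
              rw [hcount (z - s), if_neg (Ne.symm htne), if_pos rfl]; omega
            omega
          · by_cases hszt : s = z - t
            · have hzs : z - s = t := by rw [hszt, sub_sub_cancel]
              rw [if_neg hsL, if_neg hsL, if_neg hst, if_pos hszt, hzs]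
              have h1' : Multiset.count s M' = Multiset.count s M - 1 := by
                rw [hcount s, if_neg hst, if_pos hszt]; omega
              have h2' : Multiset.count t M' = Multiset.count t M - 1 := by
                rw [hcount t, if_pos rfl, if_neg htne]; omega
              have htpos' := htpos
              rw [← hszt] at htpos'
              omega
            · have hz1 : z - s ≠ t := fun h => hszt (by rw [← sub_sub_cancel z s, h])
              have hz2 : z - s ≠ z - t := fun h => hst (by
                have := congrArg (fun x => z - x) h
                simpa [sub_sub_cancel] using this)
              rw [if_neg hsL, if_neg hsL, if_neg hst, if_neg hszt]
              have h1' : Multiset.count s M' = Multiset.count s M := by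
                rw [hcount s, if_neg hst, if_neg hszt]; omega
              have h2' : Multiset.count (z - s) M' = Multiset.count (z - s) M := by
                rw [hcount (z - s), if_neg hz1, if_neg hz2]; omega
              omega
      have hsum := hM
      rw [Finset.sum_congr rfl (fun s _ => hterm s), Finset.sum_add_distrib,
        Finset.sum_add_distrib, Finset.sum_ite_eq' Finset.univ t (fun _ => 1),
        Finset.sum_ite_eq' Finset.univ (z - t) (fun _ => 1)] at hsum
      simp only [Finset.mem_univ, if_true] at hsum
      omega
    obtain ⟨C, hCM', hCcard, hCz⟩ := ih M' hsum'
    refine ⟨t ::ₘ (z - t) ::ₘ C, ?_, ?_, ?_⟩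
    · rw [Multiset.le_iff_count]
      intro a
      have hc := Multiset.le_iff_count.1 hCM' a
      rw [hcount a] at hc
      simp only [Multiset.count_cons]
      by_cases h1 : a = t
      · have h2 : a ≠ z - t := fun h => htne (h1.symm.trans h)
        rw [if_pos h1, if_neg h2] at hc
        rw [if_pos h1, if_neg h2]
        have hp : 0 < Multiset.count a M := by rw [h1]; omega
        omega
      · by_cases h2 : a = z - t
        · rw [if_neg h1, if_pos h2] at hc
          rw [if_pos h2, if_neg h1]
          have hp : 0 < Multiset.count a M := by rw [h2]; omega
          omega
        · rw [if_neg h1, if_neg h2] at hc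
          rw [if_neg h2, if_neg h1]
          omega
    · rw [Multiset.card_cons, Multiset.card_cons, hCcard]; ring
    · intro k hk
      rcases Nat.lt_or_ge k (j + 1) with hkj | hkj
      · obtain ⟨B, hBC, hBs⟩ := hCz k (by omega)
        exact ⟨B, hBC.trans ((Multiset.le_cons_self _ _).trans (Multiset.le_cons_self _ _)), hBs⟩
      · have hk' : k = j + 1 := le_antisymm hk hkj
        subst hk'
        obtain ⟨B, hBC, hBs⟩ := hCz j le_rfl
        refine ⟨t ::ₘ (z - t) ::ₘ B, ?_, ?_⟩
        · exact Multiset.cons_le_cons _ (Multiset.cons_le_cons _ hBC)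
        · rw [Multiset.sum_cons, Multiset.sum_cons, hBs, succ_nsmul]
          abel

lemma sumset_eq_SF {G : Type*} [AddCommMonoid G] [DecidableEq G] (A : Multiset G) :
    sumset A = ↑(SF A) := by
  ext x; simp [sumset, mem_SF]


open scoped Classical in
theorem stmt_12 (p : ℕ) (hp : p.Prime) [NeZero p]
    (A : Multiset (ZMod p × ZMod p)) (hA : ValidMS p A)
    (z : ZMod p × ZMod p) (hz : z ≠ 0) (j : ℕ)
    (hj : 2 * j ≤ ∑ t : ZMod p × ZMod p,
        if t ∈ AddSubgroup.zmultiples z then 0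
        else min (A.count t) (A.count (z - t))) :
    (sumset A).ncard ≥
      min p (1 + j + inCount A (AddSubgroup.zmultiples z)) *
        min p (1 + Multiset.card A - 2 * j - inCount A (AddSubgroup.zmultiples z)) := by
  classical
  set L := AddSubgroup.zmultiples z with hLdef
  -- basic facts
  have hp0 : ∀ x : ZMod p × ZMod p, p • x = 0 := by
    intro x
    have h1 : ∀ y : ZMod p, p • y = 0 := fun y => by
      rw [nsmul_eq_mul, ZMod.natCast_self, zero_mul]
    have : p • x = (p • x.1, p • x.2) := rfl
    rw [this, h1, h1, Prod.mk_zero_zero]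
  have hzord : addOrderOf z = p := by
    have hdvd : addOrderOf z ∣ p := addOrderOf_dvd_of_nsmul_eq_zero (hp0 z)
    rcases (Nat.Prime.eq_one_or_self_of_dvd hp _ hdvd) with h | h
    · exact absurd (AddMonoid.addOrderOf_eq_one_iff.1 h) hz
    · exact h
  have hLcard : Nat.card L = p := by rw [Nat.card_zmultiples]; exact hzord
  have hGcard : Nat.card (ZMod p × ZMod p) = p * p := by
    simp [Nat.card_eq_fintype_card, ZMod.card]
  have hQcard : Nat.card ((ZMod p × ZMod p) ⧸ L) = p := by
    have h := L.card_mul_index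
    rw [hLcard, hGcard] at h
    rw [← AddSubgroup.index_eq_card]
    exact Nat.eq_of_mul_eq_mul_left hp.pos h
  have hzL : z ∈ L := AddSubgroup.mem_zmultiples z
  have hsub : ∀ t : ZMod p × ZMod p, t ∉ L → (z - t ∉ L ∧ t ≠ z - t) := by
    intro t htL
    constructor
    · intro h
      exact htL (by simpa using L.sub_mem hzL h)
    · intro h
      have h2 : t + t = z := eq_sub_iff_add_eq.1 h
      apply htL
      rcases Nat.even_or_odd p with hpe | hpo
      · exfalso
        apply hz
        have hp2 : p = 2 := (Nat.Prime.even_iff hp).1 hpe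
        have h0 : (2 : ℕ) • t = 0 := by rw [← hp2]; exact hp0 t
        rw [← h2, ← two_nsmul]
        exact h0
      · have hm : (p + 1) / 2 * 2 = p + 1 := by
          rcases hpo with ⟨k, hk⟩; omega
        have hmem : ((p + 1) / 2) • z = t := by
          rw [← h2, ← two_nsmul, ← mul_nsmul', hm, add_nsmul, hp0, one_nsmul, zero_add]
        rw [hLdef, ← hmem]
        exact AddSubgroup.mem_zmultiples_iff.mpr ⟨(((p + 1) / 2 : ℕ) : ℤ), natCast_zsmul z _⟩
  -- transfer the pairing hypothesis to the filtered multiset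
  set M : Multiset (ZMod p × ZMod p) := A.filter (fun x => x ∉ L) with hMdef
  have hjM : 2 * j ≤ ∑ t : ZMod p × ZMod p,
      if t ∈ L then 0 else min (M.count t) (M.count (z - t)) := by
    refine hj.trans (le_of_eq (Finset.sum_congr rfl fun t _ => ?_))
    by_cases ht : t ∈ L
    · simp [ht, show t ∈ AddSubgroup.zmultiples z from ht]
    · have hzt : z - t ∉ L := (hsub t ht).1
      rw [if_neg ht, if_neg ht, hMdef, Multiset.count_filter, Multiset.count_filter,
        if_pos ht, if_pos hzt]
  obtain ⟨C, hCM, hCcard, hCz⟩ := extract_pairs z L hsub j M hjM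
  set Bs : Multiset (ZMod p × ZMod p) := A.filter (fun x => x ∈ L) with hBsdef
  set D : Multiset (ZMod p × ZMod p) := M - C with hDdef
  have hMD : C + D = M := by
    rw [hDdef, add_comm]
    exact tsub_add_cancel_of_le hCM
  have hsplit : Bs + C + D = A := by
    rw [add_assoc, hMD, hBsdef, hMdef]
    exact Multiset.filter_add_not _ A
  have hBsmem : ∀ x ∈ Bs, x ∈ L := fun x hx => (Multiset.mem_filter.1 hx).2
  have hBsnz : ∀ x ∈ Bs, x ≠ 0 := by
    intro x hx h0
    exact hA.1 (h0 ▸ (Multiset.mem_filter.1 hx).1)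
  have hDnL : ∀ x ∈ D, x ∉ L := by
    intro x hx
    have : x ∈ M := Multiset.mem_of_le (tsub_le_self) hx
    exact (Multiset.mem_filter.1 this).2
  -- the L-direction set
  set T : Finset (ZMod p × ZMod p) := SF (Bs + Multiset.replicate j z) with hTdef
  have hTmem : ∀ x ∈ Bs + Multiset.replicate j z, x ∈ L := by
    intro x hx
    rcases Multiset.mem_add.1 hx with hx | hx
    · exact hBsmem x hx
    · rw [Multiset.eq_of_mem_replicate hx]; exact hzL
  have hTnz : ∀ x ∈ Bs + Multiset.replicate j z, x ≠ 0 := by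
    intro x hx
    rcases Multiset.mem_add.1 hx with hx | hx
    · exact hBsnz x hx
    · rw [Multiset.eq_of_mem_replicate hx]; exact hz
  have hTcard : min p (Multiset.card Bs + j + 1) ≤ T.card := by
    have := olson_subgroup hp L hLcard (Bs + Multiset.replicate j z) hTmem hTnz
    simpa [hTdef] using this
  have hTL : ∀ τ ∈ T, τ ∈ L := by
    intro τ hτ
    obtain ⟨B, hB, rfl⟩ := mem_SF.1 hτ
    exact multiset_sum_mem B (fun x hx => hTmem x (Multiset.mem_of_le hB hx))
  have hTsub : ∀ τ ∈ T, τ ∈ SF (Bs + C) := by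
    intro τ hτ
    obtain ⟨B, hB, rfl⟩ := mem_SF.1 hτ
    obtain ⟨B₁, hB₁, B₂, hB₂, rfl⟩ := multiset_le_add hB
    obtain ⟨k, hkj, rfl⟩ := Multiset.le_replicate_iff.1 hB₂
    obtain ⟨B₃, hB₃, hB₃s⟩ := hCz k hkj
    refine mem_SF.2 ⟨B₁ + B₃, add_le_add hB₁ hB₃, ?_⟩
    rw [Multiset.sum_add, Multiset.sum_add, hB₃s, Multiset.sum_replicate]
  -- the quotient direction
  haveI : Fintype ((ZMod p × ZMod p) ⧸ L) := Fintype.ofFinite _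
  set π : (ZMod p × ZMod p) →+ (ZMod p × ZMod p) ⧸ L := QuotientAddGroup.mk' L with hπdef
  set R : Finset ((ZMod p × ZMod p) ⧸ L) := (SF D).image π with hRdef
  have hRcard : min p (Multiset.card D + 1) ≤ R.card := by
    have hnz : ∀ x ∈ D.map π, x ≠ 0 := by
      intro x hx
      obtain ⟨d, hd, rfl⟩ := Multiset.mem_map.1 hx
      simpa [hπdef, QuotientAddGroup.eq_zero_iff] using hDnL d hd
    have h := olson_group hp hQcard (D.map π) hnz
    rw [Multiset.card_map, SF_map] at h
    exact h
  -- fibers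
  have hfiber : ∀ q ∈ R, min p (Multiset.card Bs + j + 1) ≤
      ((SF A).filter (fun x => π x = q)).card := by
    intro q hq
    obtain ⟨d, hd, rfl⟩ := Finset.mem_image.1 hq
    have himg : T.image (fun τ => d + τ) ⊆ (SF A).filter (fun x => π x = π d) := by
      intro x hx
      obtain ⟨τ, hτ, rfl⟩ := Finset.mem_image.1 hx
      refine Finset.mem_filter.2 ⟨?_, ?_⟩
      · obtain ⟨B₁, hB₁, hB₁s⟩ := mem_SF.1 (hTsub τ hτ)
        obtain ⟨B₂, hB₂, hB₂s⟩ := mem_SF.1 hd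
        refine mem_SF.2 ⟨B₁ + B₂, ?_, ?_⟩
        · rw [← hsplit]
          exact add_le_add hB₁ hB₂
        · rw [Multiset.sum_add, hB₁s, hB₂s, add_comm]
      · rw [map_add]
        have : π τ = 0 := (QuotientAddGroup.eq_zero_iff τ).2 (hTL τ hτ)
        rw [this, add_zero]
    calc min p (Multiset.card Bs + j + 1) ≤ T.card := hTcard
      _ = (T.image (fun τ => d + τ)).card :=
          (Finset.card_image_of_injective _ (add_right_injective d)).symm
      _ ≤ _ := Finset.card_le_card himg
  -- combine
  have hdisj : ∀ q₁ ∈ R, ∀ q₂ ∈ R, q₁ ≠ q₂ →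
      Disjoint ((SF A).filter (fun x => π x = q₁)) ((SF A).filter (fun x => π x = q₂)) := by
    intro q₁ _ q₂ _ hne
    refine Finset.disjoint_left.2 fun x hx₁ hx₂ => hne ?_
    rw [← (Finset.mem_filter.1 hx₁).2, ← (Finset.mem_filter.1 hx₂).2]
  have hcount : R.card * min p (Multiset.card Bs + j + 1) ≤ (SF A).card := by
    calc R.card * min p (Multiset.card Bs + j + 1)
        ≤ ∑ q ∈ R, ((SF A).filter (fun x => π x = q)).card :=
          Finset.card_nsmul_le_sum R _ _ hfiber
      _ = (R.biUnion fun q => (SF A).filter (fun x => π x = q)).card :=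
          (Finset.card_biUnion hdisj).symm
      _ ≤ (SF A).card := Finset.card_le_card
          (Finset.biUnion_subset.2 fun q _ => Finset.filter_subset _ _)
  -- final arithmetic
  have hIC : inCount A L = Multiset.card Bs := rfl
  have hcards : Multiset.card A = Multiset.card Bs + 2 * j + Multiset.card D := by
    rw [← hsplit]
    simp [hCcard]
  rw [ge_iff_le, sumset_eq_SF, Set.ncard_coe_finset, hIC]
  have e1 : min p (1 + j + Multiset.card Bs) = min p (Multiset.card Bs + j + 1) := by omega
  have e2 : min p (1 + Multiset.card A - 2 * j - Multiset.card Bs)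
      = min p (Multiset.card D + 1) := by omega
  rw [e1, e2]
  calc min p (Multiset.card Bs + j + 1) * min p (Multiset.card D + 1)
      ≤ min p (Multiset.card Bs + j + 1) * R.card :=
        Nat.mul_le_mul_left _ hRcard
    _ = R.card * min p (Multiset.card Bs + j + 1) := Nat.mul_comm _ _
    _ ≤ (SF A).card := hcount
end
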